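/- For a partial order P on [n], the Euclidean volume of the chain polytope C(P) equals e(P)/n!, i.e., Vol(C(P)) = Vol(O(P)) = e(P)/n!. -/

import Mathlib

open MeasureTheory Finset
open scoped Classical

/-- The order polytope of a partial order `P` on `Fin n`. -/
def orderPolytope (n : ℕ) (P : PartialOrder (Fin n)) : Set (Fin n → ℝ) :=
  {x | (∀ i, 0 ≤ x i ∧ x i ≤ 1) ∧ ∀ j k, P.le j k → x j ≤ x k}

/-- The chain polytope of a partial order `P` on `Fin n`. -/
def chainPolytope (n : ℕ) (P : PartialOrder (Fin n)) : Set (Fin n → ℝ) :=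
  {x | (∀ i, 0 ≤ x i) ∧ ∀ C : Finset (Fin n), IsChain P.le ↑C → ∑ i ∈ C, x i ≤ 1}

/-- The number of linear extensions of a partial order `P` on `Fin n`. -/
noncomputable def numLinExtOrder (n : ℕ) (P : PartialOrder (Fin n)) : ℕ :=
  Nat.card {f : Fin n ≃ Fin n // ∀ j k, P.lt j k → f j < f k}

section Transfer

variable {n : ℕ} (P : PartialOrder (Fin n))

noncomputable def predP (i : Fin n) : Finset (Fin n) := univ.filter (fun j => P.lt j i)

noncomputable def chainsLe (i : Fin n) : Finset (Finset (Fin n)) :=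
  univ.powerset.filter (fun C => IsChain P.le ↑C ∧ ∀ j ∈ C, P.le j i)

noncomputable def chainsLt (i : Fin n) : Finset (Finset (Fin n)) :=
  univ.powerset.filter (fun C => IsChain P.le ↑C ∧ ∀ j ∈ C, P.lt j i)

noncomputable def phiT (x : Fin n → ℝ) : Fin n → ℝ :=
  fun i => x i - (predP P i).fold max 0 x

noncomputable def psiT (y : Fin n → ℝ) : Fin n → ℝ :=
  fun i => (chainsLe P i).fold max 0 (fun C => ∑ j ∈ C, y j)

variable {P}

-- order helper lemmas for the explicit partial order P
lemma Ple_of_lt {i j : Fin n} (h : P.lt i j) : P.le i j :=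
  ((P.lt_iff_le_not_ge i j).1 h).1

lemma Plt_of_le_of_ne {i j : Fin n} (h : P.le i j) (hne : i ≠ j) : P.lt i j := by
  rw [P.lt_iff_le_not_ge]
  exact ⟨h, fun h' => hne (P.le_antisymm _ _ h h')⟩

lemma Plt_irrefl (i : Fin n) : ¬ P.lt i i := by
  rw [P.lt_iff_le_not_ge]; exact fun h => h.2 h.1

lemma Plt_ne {i j : Fin n} (h : P.lt i j) : i ≠ j := by
  rintro rfl; exact Plt_irrefl i h

lemma Plt_of_le_of_lt {i j k : Fin n} (h : P.le i j) (h' : P.lt j k) : P.lt i k := by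
  rw [P.lt_iff_le_not_ge] at h' ⊢
  exact ⟨P.le_trans _ _ _ h h'.1, fun hk => h'.2 (P.le_trans _ _ _ hk h)⟩

lemma fold_max_nonneg {α : Type*} {s : Finset α} {f : α → ℝ} : 0 ≤ s.fold max 0 f :=
  (Finset.le_fold_max _).2 (Or.inl le_rfl)

lemma le_fold_max_of_mem {α : Type*} {s : Finset α} {f : α → ℝ} {a : α} (ha : a ∈ s) :
    f a ≤ s.fold max 0 f :=
  (Finset.le_fold_max _).2 (Or.inr ⟨a, ha, le_rfl⟩)

lemma sum_le_fold {s : Finset (Finset (Fin n))} {y : Fin n → ℝ} {C : Finset (Fin n)}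
    (h : C ∈ s) : ∑ j ∈ C, y j ≤ s.fold max 0 (fun C => ∑ j ∈ C, y j) :=
  le_fold_max_of_mem (f := fun C => ∑ j ∈ C, y j) h

lemma mem_chainsLe {i : Fin n} {C : Finset (Fin n)} :
    C ∈ chainsLe P i ↔ IsChain P.le ↑C ∧ ∀ j ∈ C, P.le j i := by
  simp [chainsLe]

lemma mem_chainsLt {i : Fin n} {C : Finset (Fin n)} :
    C ∈ chainsLt P i ↔ IsChain P.le ↑C ∧ ∀ j ∈ C, P.lt j i := by
  simp [chainsLt]

lemma mem_predP {i j : Fin n} : j ∈ predP P i ↔ P.lt j i := by simp [predP]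

/-- a nonempty finite chain has a greatest element -/
lemma chain_exists_greatest :
    ∀ C : Finset (Fin n), IsChain P.le ↑C → C.Nonempty → ∃ m ∈ C, ∀ j ∈ C, P.le j m := by
  intro C
  induction C using Finset.induction_on with
  | empty => intro _ h; simp at h
  | @insert a s ha ih =>
    intro hch _
    rcases s.eq_empty_or_nonempty with rfl | hs
    · exact ⟨a, by simp, by simp [P.le_refl]⟩
    · have hchs : IsChain P.le ↑s := hch.mono (by simp [Set.subset_insert])
      obtain ⟨m, hm, hmax⟩ := ih hchs hs
      have ham : a ≠ m := by rintro rfl; exact ha hm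
      rcases hch (by simp) (by simp [hm]) ham with h | h
      · refine ⟨m, by simp [hm], ?_⟩
        intro j hj
        rcases Finset.mem_insert.1 hj with rfl | hj
        · exact h
        · exact hmax j hj
      · refine ⟨a, by simp, ?_⟩
        intro j hj
        rcases Finset.mem_insert.1 hj with rfl | hj
        · exact P.le_refl j
        · exact P.le_trans _ _ _ (hmax j hj) h

lemma psiT_nonneg (y : Fin n → ℝ) (i : Fin n) : 0 ≤ psiT P y i := fold_max_nonneg

lemma psiT_rec {y : Fin n → ℝ} (hy : ∀ i, 0 ≤ y i) (i : Fin n) :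
    psiT P y i = y i + (predP P i).fold max 0 (psiT P y) := by
  have hB0 : (0:ℝ) ≤ (chainsLt P i).fold max 0 (fun C => ∑ j ∈ C, y j) := fold_max_nonneg
  have hstep1 : psiT P y i = y i + (chainsLt P i).fold max 0 (fun C => ∑ j ∈ C, y j) := by
    apply le_antisymm
    · rw [psiT, Finset.fold_max_le]
      constructor
      · linarith [hy i]
      · intro C hC
        obtain ⟨hch, hle⟩ := mem_chainsLe.1 hC
        by_cases hiC : i ∈ C
        · rw [← Finset.add_sum_erase _ _ hiC]
          have hmem : C.erase i ∈ chainsLt P i := by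
            refine mem_chainsLt.2 ⟨hch.mono (by simp [Finset.erase_subset]), ?_⟩
            intro j hj
            obtain ⟨hji, hjC⟩ := Finset.mem_erase.1 hj
            exact Plt_of_le_of_ne (hle j hjC) hji
          exact add_le_add_right (sum_le_fold hmem) _
        · have hmem : C ∈ chainsLt P i := by
            refine mem_chainsLt.2 ⟨hch, fun j hj => ?_⟩
            exact Plt_of_le_of_ne (hle j hj) (fun h => hiC (h ▸ hj))
          have := sum_le_fold (y := y) hmem
          linarith [hy i]
    · have h1 : y i ≤ psiT P y i := by
        have hmem : ({i} : Finset (Fin n)) ∈ chainsLe P i := by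
          refine mem_chainsLe.2 ⟨by simp [IsChain, Set.Pairwise], by simp [P.le_refl]⟩
        simpa [psiT] using sum_le_fold (y := y) hmem
      have h2 : (chainsLt P i).fold max 0 (fun C => ∑ j ∈ C, y j) ≤ psiT P y i - y i := by
        rw [Finset.fold_max_le]
        refine ⟨by linarith, fun C hC => ?_⟩
        obtain ⟨hch, hlt⟩ := mem_chainsLt.1 hC
        have hiC : i ∉ C := fun h => Plt_irrefl i (hlt i h)
        have hmem : insert i C ∈ chainsLe P i := by
          refine mem_chainsLe.2 ⟨?_, ?_⟩
          · rw [Finset.coe_insert]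
            exact hch.insert (fun b hb _ => Or.inr (Ple_of_lt (hlt b hb)))
          · intro j hj
            rcases Finset.mem_insert.1 hj with rfl | hj
            · exact P.le_refl j
            · exact Ple_of_lt (hlt j hj)
        have h3 : ∑ j ∈ insert i C, y j ≤ psiT P y i := sum_le_fold hmem
        rw [Finset.sum_insert hiC] at h3
        linarith
      linarith
  have hstep2 : (chainsLt P i).fold max 0 (fun C => ∑ j ∈ C, y j)
      = (predP P i).fold max 0 (psiT P y) := by
    apply le_antisymm
    · rw [Finset.fold_max_le]
      refine ⟨fold_max_nonneg, fun C hC => ?_⟩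
      obtain ⟨hch, hlt⟩ := mem_chainsLt.1 hC
      rcases C.eq_empty_or_nonempty with rfl | hCne
      · simpa using (fold_max_nonneg : (0:ℝ) ≤ (predP P i).fold max 0 (psiT P y))
      · obtain ⟨m, hm, hmax⟩ := chain_exists_greatest C hch hCne
        have h1 : ∑ j ∈ C, y j ≤ psiT P y m :=
          sum_le_fold (mem_chainsLe.2 ⟨hch, hmax⟩)
        have h2 : psiT P y m ≤ (predP P i).fold max 0 (psiT P y) :=
          le_fold_max_of_mem (mem_predP.2 (hlt m hm))
        linarith
    · rw [Finset.fold_max_le]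
      refine ⟨hB0, fun j hj => ?_⟩
      have hji := mem_predP.1 hj
      rw [psiT, Finset.fold_max_le]
      refine ⟨hB0, fun C hC => ?_⟩
      obtain ⟨hch, hle⟩ := mem_chainsLe.1 hC
      exact sum_le_fold (mem_chainsLt.2 ⟨hch, fun k hk => Plt_of_le_of_lt (hle k hk) hji⟩)
  rw [hstep1, hstep2]

lemma phiT_psiT {y : Fin n → ℝ} (hy : ∀ i, 0 ≤ y i) : phiT P (psiT P y) = y := by
  funext i
  rw [phiT, psiT_rec hy i]
  ring


lemma phiT_nonneg {x : Fin n → ℝ} (hx : x ∈ orderPolytope n P) (i : Fin n) :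
    0 ≤ phiT P x i := by
  rw [phiT, sub_nonneg, Finset.fold_max_le]
  exact ⟨(hx.1 i).1, fun j hj => hx.2 j i (Ple_of_lt (mem_predP.1 hj))⟩

lemma fold_pred_le {x : Fin n → ℝ} (hx : x ∈ orderPolytope n P) {m' m : Fin n}
    (h : P.lt m' m) : x m' ≤ (predP P m).fold max 0 x :=
  le_fold_max_of_mem (mem_predP.2 h)

/-- key telescoping bound for sums of `phiT` over chains -/
lemma phiT_chain_sum_le {x : Fin n → ℝ} (hx : x ∈ orderPolytope n P) :
    ∀ C : Finset (Fin n), IsChain P.le ↑C → ∀ m ∈ C, (∀ j ∈ C, P.le j m) →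
      ∑ i ∈ C, phiT P x i ≤ x m := by
  intro C
  induction C using Finset.strongInduction with
  | _ C IH =>
    intro hch m hm hmax
    rw [← Finset.add_sum_erase _ _ hm]
    rcases (C.erase m).eq_empty_or_nonempty with he | hne
    · rw [he]
      simp only [Finset.sum_empty, add_zero, phiT]
      linarith [fold_max_nonneg (s := predP P m) (f := x)]
    · obtain ⟨m', hm', hmax'⟩ := chain_exists_greatest (C.erase m)
        (hch.mono (by simp [Finset.erase_subset])) hne
      have hm'm : P.lt m' m :=
        Plt_of_le_of_ne (hmax m' (Finset.mem_of_mem_erase hm')) (Finset.ne_of_mem_erase hm')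
      have h1 : ∑ i ∈ C.erase m, phiT P x i ≤ x m' :=
        IH _ (Finset.erase_ssubset hm) (hch.mono (by simp [Finset.erase_subset])) m' hm' hmax'
      have h2 : phiT P x m ≤ x m - x m' := by
        rw [phiT]
        linarith [fold_pred_le hx hm'm]
      linarith

lemma phiT_mem_chain {x : Fin n → ℝ} (hx : x ∈ orderPolytope n P) :
    phiT P x ∈ chainPolytope n P := by
  refine ⟨phiT_nonneg hx, fun C hch => ?_⟩
  rcases C.eq_empty_or_nonempty with rfl | hne
  · simp
  · obtain ⟨m, hm, hmax⟩ := chain_exists_greatest C hch hne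
    exact le_trans (phiT_chain_sum_le hx C hch m hm hmax) (hx.1 m).2

lemma psiT_mem_order {y : Fin n → ℝ} (hy : y ∈ chainPolytope n P) :
    psiT P y ∈ orderPolytope n P := by
  refine ⟨fun i => ⟨psiT_nonneg y i, ?_⟩, fun j k hjk => ?_⟩
  · rw [psiT, Finset.fold_max_le]
    exact ⟨zero_le_one, fun C hC => hy.2 C (mem_chainsLe.1 hC).1⟩
  · rw [psiT, Finset.fold_max_le]
    refine ⟨psiT_nonneg y k, fun C hC => ?_⟩
    obtain ⟨hch, hle⟩ := mem_chainsLe.1 hC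
    exact sum_le_fold (mem_chainsLe.2 ⟨hch, fun l hl => P.le_trans _ _ _ (hle l hl) hjk⟩)

lemma predP_ssubset {i j : Fin n} (h : P.lt j i) : predP P j ⊂ predP P i := by
  refine Finset.ssubset_iff_of_subset (fun k hk => mem_predP.2 (Plt_of_le_of_lt
    (Ple_of_lt (mem_predP.1 hk)) h)) |>.2 ⟨j, mem_predP.2 h, fun hj => Plt_irrefl j (mem_predP.1 hj)⟩

lemma psiT_phiT {x : Fin n → ℝ} (hx : x ∈ orderPolytope n P) : psiT P (phiT P x) = x := by
  have key : ∀ k (i : Fin n), (predP P i).card = k → psiT P (phiT P x) i = x i := by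
    intro k
    induction k using Nat.strong_induction_on with
    | _ k IH =>
      intro i hk
      rw [psiT_rec (phiT_nonneg hx) i]
      have hfold : (predP P i).fold max 0 (psiT P (phiT P x)) = (predP P i).fold max 0 x := by
        apply Finset.fold_congr
        intro j hj
        have hsub := predP_ssubset (mem_predP.1 hj)
        exact IH (predP P j).card (hk ▸ Finset.card_lt_card hsub) j rfl
      rw [hfold, phiT]
      ring
  funext i
  exact key _ i rfl

lemma phiT_injOn : ∀ x ∈ orderPolytope n P, ∀ x' ∈ orderPolytope n P,
    phiT P x = phiT P x' → x = x' := by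
  intro x hx x' hx' h
  rw [← psiT_phiT hx, ← psiT_phiT hx', h]

end Transfer
section Geometry

variable (n : ℕ)

def cubeN : Set (Fin n → ℝ) := {x | ∀ i, 0 ≤ x i ∧ x i ≤ 1}

def simplexOf (σ : Equiv.Perm (Fin n)) : Set (Fin n → ℝ) :=
  {x | x ∈ cubeN n ∧ Monotone (x ∘ σ)}

def degen : Set (Fin n → ℝ) := {x | ¬ Function.Injective x}

variable {n}

lemma simplexOf_subset_cube {σ : Equiv.Perm (Fin n)} : simplexOf n σ ⊆ cubeN n :=
  fun _ hx => hx.1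

lemma measurableSet_simplexOf (σ : Equiv.Perm (Fin n)) : MeasurableSet (simplexOf n σ) := by
  have h1 : MeasurableSet (cubeN n) := by
    have : cubeN n = ⋂ i, {x : Fin n → ℝ | 0 ≤ x i ∧ x i ≤ 1} := by ext x; simp [cubeN]
    rw [this]
    exact MeasurableSet.iInter fun i =>
      (measurableSet_le measurable_const (measurable_pi_apply i)).inter
        (measurableSet_le (measurable_pi_apply i) measurable_const)
  have h2 : MeasurableSet {x : Fin n → ℝ | Monotone (x ∘ σ)} := by
    have : {x : Fin n → ℝ | Monotone (x ∘ σ)} =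
        ⋂ (p : Fin n × Fin n) (_ : p.1 ≤ p.2), {x : Fin n → ℝ | x (σ p.1) ≤ x (σ p.2)} := by
      ext x
      simp only [Set.mem_setOf_eq, Set.mem_iInter]
      exact ⟨fun h p hp => h hp, fun h a b hab => h (a, b) hab⟩
    rw [this]
    exact MeasurableSet.iInter fun p => MeasurableSet.iInter fun _ =>
      measurableSet_le (measurable_pi_apply _) (measurable_pi_apply _)
  exact h1.inter h2

lemma volume_simplexOf_eq (σ : Equiv.Perm (Fin n)) :
    volume (simplexOf n σ) = volume (simplexOf n 1) := by
  have hT := volume_measurePreserving_piCongrLeft (fun _ : Fin n => ℝ) σ.symm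
  have hpre : (MeasurableEquiv.piCongrLeft (fun _ : Fin n => ℝ) σ.symm) ⁻¹' (simplexOf n 1)
      = simplexOf n σ := by
    ext x
    have hx : (MeasurableEquiv.piCongrLeft (fun _ : Fin n => ℝ) σ.symm) x = x ∘ σ := by
      funext b
      have h1 := Equiv.piCongrLeft_apply_apply (P := fun _ : Fin n => ℝ) (e := σ.symm) x (σ b)
      rw [MeasurableEquiv.coe_piCongrLeft]
      simpa using h1
    simp only [Set.mem_preimage, simplexOf, Set.mem_setOf_eq, hx, cubeN]
    constructor
    · rintro ⟨h1, h2⟩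
      refine ⟨fun i => ?_, by simpa using h2⟩
      simpa using h1 (σ.symm i)
    · rintro ⟨h1, h2⟩
      exact ⟨fun i => h1 (σ i), by simpa using h2⟩
  rw [← hpre, hT.measure_preimage (measurableSet_simplexOf 1).nullMeasurableSet]

lemma cube_subset_iUnion : cubeN n ⊆ ⋃ σ : Equiv.Perm (Fin n), simplexOf n σ :=
  fun x hx => Set.mem_iUnion.2 ⟨Tuple.sort x, hx, Tuple.monotone_sort x⟩

lemma perm_strictMono_eq_one {ρ : Equiv.Perm (Fin n)} (h : StrictMono (⇑ρ)) : ρ = 1 := by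
  have h2 : (StrictMono.orderIsoOfSurjective (⇑ρ) h ρ.surjective : Fin n ≃o Fin n)
      = OrderIso.refl (Fin n) := Subsingleton.elim _ _
  apply Equiv.ext
  intro i
  have := congrArg (fun e : Fin n ≃o Fin n => e i) h2
  simpa using this

lemma inter_subset_degen {σ τ : Equiv.Perm (Fin n)} (hst : σ ≠ τ) :
    simplexOf n σ ∩ simplexOf n τ ⊆ degen n := by
  rintro x ⟨⟨_, h1⟩, ⟨_, h2⟩⟩
  by_contra hx
  have hinj : Function.Injective x := not_not.1 hx
  have hg : StrictMono (x ∘ σ) := h1.strictMono_of_injective (hinj.comp σ.injective)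
  have hh : StrictMono (x ∘ τ) := h2.strictMono_of_injective (hinj.comp τ.injective)
  have hρ : StrictMono (⇑(τ.trans σ.symm)) := by
    intro a b hab
    have hlt : (x ∘ σ) (σ.symm (τ a)) < (x ∘ σ) (σ.symm (τ b)) := by
      simpa [Function.comp] using hh hab
    exact hg.lt_iff_lt.1 hlt
  have hone := perm_strictMono_eq_one hρ
  apply hst
  apply Equiv.ext
  intro i
  have := congrArg (fun p : Equiv.Perm (Fin n) => σ (p i)) hone
  simpa using this.symm

lemma volume_degen : volume (degen n) = 0 := by
  have hsub : degen n ⊆ ⋃ (p : Fin n × Fin n) (_ : p.1 ≠ p.2), {x : Fin n → ℝ | x p.1 = x p.2} := by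
    intro x hx
    simp only [degen, Set.mem_setOf_eq, Function.Injective] at hx
    push_neg at hx
    obtain ⟨a, b, hab, hne⟩ := hx
    exact Set.mem_iUnion.2 ⟨(a, b), Set.mem_iUnion.2 ⟨hne, hab⟩⟩
  refine measure_mono_null hsub (measure_iUnion_null fun p => measure_iUnion_null fun hp => ?_)
  have hker : {x : Fin n → ℝ | x p.1 = x p.2} =
      (LinearMap.ker ((LinearMap.proj p.1 : (Fin n → ℝ) →ₗ[ℝ] ℝ) - LinearMap.proj p.2)
        : Set (Fin n → ℝ)) := by
    ext x
    simp [LinearMap.mem_ker, sub_eq_zero, eq_comm]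
  rw [hker]
  apply Measure.addHaar_submodule
  intro h
  have h0 := LinearMap.ext_iff.1 (LinearMap.ker_eq_top.mp h) (Pi.single p.1 1)
  simp [Pi.single_eq_same, Pi.single_eq_of_ne (Ne.symm hp), sub_eq_zero] at h0

lemma volume_cubeN : volume (cubeN n) = 1 := by
  have hc : cubeN n = Set.pi Set.univ (fun _ : Fin n => Set.Icc (0:ℝ) 1) := by
    ext x; simp [cubeN, Set.mem_pi, Set.mem_Icc, Pi.le_def, forall_and]
  rw [hc, volume_pi_pi]
  simp [Real.volume_Icc]

lemma volume_simplexOf (σ : Equiv.Perm (Fin n)) :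
    volume (simplexOf n σ) = ((n.factorial : ENNReal))⁻¹ := by
  have hd : (↑(Finset.univ : Finset (Equiv.Perm (Fin n))) : Set (Equiv.Perm (Fin n))).Pairwise
      (Function.onFun (AEDisjoint volume) (fun σ => simplexOf n σ)) := by
    intro σ _ τ _ hne
    exact measure_mono_null (inter_subset_degen hne) volume_degen
  have hm : ∀ τ ∈ (Finset.univ : Finset (Equiv.Perm (Fin n))), NullMeasurableSet (simplexOf n τ) :=
    fun τ _ => (measurableSet_simplexOf τ).nullMeasurableSet
  have hsum := measure_biUnion_finset₀ (μ := volume) hd hm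
  have hunion : ⋃ τ ∈ (Finset.univ : Finset (Equiv.Perm (Fin n))), simplexOf n τ = cubeN n := by
    apply Set.Subset.antisymm
    · exact Set.iUnion₂_subset fun τ _ => simplexOf_subset_cube
    · intro x hx
      obtain ⟨τ, hτ⟩ := Set.mem_iUnion.1 (cube_subset_iUnion hx)
      exact Set.mem_biUnion (Finset.mem_univ τ) hτ
  rw [hunion, volume_cubeN] at hsum
  have hconst : ∀ τ ∈ (Finset.univ : Finset (Equiv.Perm (Fin n))),
      volume (simplexOf n τ) = volume (simplexOf n 1) := fun τ _ => volume_simplexOf_eq τ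
  rw [Finset.sum_congr rfl hconst, Finset.sum_const, Finset.card_univ, Fintype.card_perm,
    Fintype.card_fin, nsmul_eq_mul] at hsum
  have hkey : (n.factorial : ENNReal) * volume (simplexOf n 1) = 1 := hsum.symm
  have hne : (n.factorial : ENNReal) ≠ 0 := Nat.cast_ne_zero.2 n.factorial_ne_zero
  have htop : (n.factorial : ENNReal) ≠ ⊤ := ENNReal.natCast_ne_top _
  rw [volume_simplexOf_eq σ]
  calc volume (simplexOf n 1)
      = (n.factorial : ENNReal)⁻¹ * ((n.factorial : ENNReal) * volume (simplexOf n 1)) := by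
        rw [← mul_assoc, ENNReal.inv_mul_cancel hne htop, one_mul]
    _ = (n.factorial : ENNReal)⁻¹ := by rw [hkey, mul_one]

end Geometry

section PFreeHelpers

variable {n : ℕ}

lemma mono_le_of_symm_le {x : Fin n → ℝ} {σ : Equiv.Perm (Fin n)} (hm : Monotone (x ∘ σ))
    {j k : Fin n} (h : σ.symm j ≤ σ.symm k) : x j ≤ x k := by
  have h2 := hm h
  simpa using h2

lemma mono_le_of_symm_lt {x : Fin n → ℝ} {σ : Equiv.Perm (Fin n)} (hm : Monotone (x ∘ σ))
    {j k : Fin n} (h : σ.symm j < σ.symm k) : x j ≤ x k :=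
  mono_le_of_symm_le hm h.le

lemma mono_le_of_not_lt {x : Fin n → ℝ} {σ : Equiv.Perm (Fin n)} (hm : Monotone (x ∘ σ))
    {j k : Fin n} (h : ¬ σ.symm j < σ.symm k) : x k ≤ x j :=
  mono_le_of_symm_le hm (not_lt.1 h)

noncomputable def jmaxF (σ : Equiv.Perm (Fin n)) (s : Finset (Fin n)) (h : s.Nonempty) : Fin n :=
  σ ((s.image σ.symm).max' (h.image _))

lemma jmaxF_mem (σ : Equiv.Perm (Fin n)) (s : Finset (Fin n)) (h : s.Nonempty) :
    jmaxF σ s h ∈ s := by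
  have hmem := (s.image σ.symm).max'_mem (h.image _)
  obtain ⟨j, hj, hje⟩ := Finset.mem_image.1 hmem
  rw [jmaxF, ← hje]
  simpa using hj

lemma symm_le_jmaxF {σ : Equiv.Perm (Fin n)} {s : Finset (Fin n)} {h : s.Nonempty} {j : Fin n}
    (hj : j ∈ s) : σ.symm j ≤ σ.symm (jmaxF σ s h) := by
  rw [jmaxF, Equiv.symm_apply_apply]
  exact Finset.le_max' _ _ (Finset.mem_image_of_mem _ hj)

noncomputable def LmapF (σ : Equiv.Perm (Fin n)) (pr : Fin n → Finset (Fin n)) :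
    (Fin n → ℝ) →ₗ[ℝ] (Fin n → ℝ) :=
  LinearMap.pi fun i => (LinearMap.proj i : (Fin n → ℝ) →ₗ[ℝ] ℝ) -
    (if h : (pr i).Nonempty then LinearMap.proj (jmaxF σ (pr i) h) else 0)

lemma LmapF_apply (σ : Equiv.Perm (Fin n)) (pr : Fin n → Finset (Fin n)) (x : Fin n → ℝ)
    (i : Fin n) :
    LmapF σ pr x i = x i - (if h : (pr i).Nonempty then x (jmaxF σ (pr i) h) else 0) := by
  simp only [LmapF, LinearMap.pi_apply, LinearMap.sub_apply, LinearMap.proj_apply]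
  by_cases h : (pr i).Nonempty
  · simp [h]
  · simp [h]

lemma det_LmapF (σ : Equiv.Perm (Fin n)) (pr : Fin n → Finset (Fin n))
    (hlt : ∀ i (h : (pr i).Nonempty), σ.symm (jmaxF σ (pr i) h) < σ.symm i) :
    LinearMap.det (LmapF σ pr) = 1 := by
  rw [← LinearMap.det_toMatrix']
  have hM : ∀ i j, LinearMap.toMatrix' (LmapF σ pr) i j =
      (if j = i then (1:ℝ) else 0) -
        (if h : (pr i).Nonempty then (if j = jmaxF σ (pr i) h then 1 else 0) else 0) := by
    intro i j
    rw [LinearMap.toMatrix'_apply, LmapF_apply]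
    by_cases h : (pr i).Nonempty
    · simp only [dif_pos h]
      congr 1
      · simp [eq_comm, Pi.single_apply]
      · simp [eq_comm, Pi.single_apply]
    · simp only [dif_neg h]
      simp [eq_comm, Pi.single_apply]
  rw [← Matrix.det_submatrix_equiv_self σ (LinearMap.toMatrix' (LmapF σ pr))]
  rw [Matrix.det_of_lowerTriangular]
  · apply Finset.prod_eq_one
    intro a _
    rw [Matrix.submatrix_apply, hM]
    by_cases h : (pr (σ a)).Nonempty
    · rw [dif_pos h, if_pos rfl, if_neg, sub_zero]
      intro heq
      have hja := hlt (σ a) h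
      rw [← heq, Equiv.symm_apply_apply] at hja
      exact lt_irrefl _ hja
    · rw [dif_neg h, if_pos rfl, sub_zero]
  · intro a b hab
    have hab' : a < b := hab
    rw [Matrix.submatrix_apply, hM]
    have hne : σ b ≠ σ a := fun h => (ne_of_lt hab') (σ.injective h).symm
    rw [if_neg hne]
    by_cases h : (pr (σ a)).Nonempty
    · rw [dif_pos h, if_neg, sub_zero]
      intro heq
      have hja := hlt (σ a) h
      rw [← heq, Equiv.symm_apply_apply, Equiv.symm_apply_apply] at hja
      exact absurd hja (not_lt.2 hab'.le)
    · rw [dif_neg h, sub_zero]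

lemma volume_LmapF_image (σ : Equiv.Perm (Fin n)) (pr : Fin n → Finset (Fin n))
    (hlt : ∀ i (h : (pr i).Nonempty), σ.symm (jmaxF σ (pr i) h) < σ.symm i)
    (s : Set (Fin n → ℝ)) : volume (LmapF σ pr '' s) = volume s := by
  rw [Measure.addHaar_image_linearMap, det_LmapF σ pr hlt]
  simp

lemma volume_LmapF_image_le (σ : Equiv.Perm (Fin n)) (pr : Fin n → Finset (Fin n))
    {s : Set (Fin n → ℝ)} (hs : volume s = 0) : volume (LmapF σ pr '' s) = 0 := by
  rw [Measure.addHaar_image_linearMap, hs, mul_zero]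

lemma measurableSet_LmapF_image (σ : Equiv.Perm (Fin n)) (pr : Fin n → Finset (Fin n))
    (hlt : ∀ i (h : (pr i).Nonempty), σ.symm (jmaxF σ (pr i) h) < σ.symm i)
    {s : Set (Fin n → ℝ)} (hs : MeasurableSet s) : MeasurableSet (LmapF σ pr '' s) := by
  have hdet : LinearMap.det (LmapF σ pr) ≠ 0 := by
    rw [det_LmapF σ pr hlt]; exact one_ne_zero
  set g := LinearEquiv.toContinuousLinearEquiv (LinearMap.equivOfDetNeZero (LmapF σ pr) hdet)
  have himg : LmapF σ pr '' s = ⇑g.symm ⁻¹' s := by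
    rw [← ContinuousLinearEquiv.image_eq_preimage_symm]
    rfl
  rw [himg]
  exact hs.preimage g.symm.continuous.measurable

end PFreeHelpers
section OrderVolume

variable {n : ℕ} (P : PartialOrder (Fin n))

noncomputable def extE : Finset (Equiv.Perm (Fin n)) :=
  univ.filter (fun σ => ∀ j k, P.lt j k → σ.symm j < σ.symm k)

variable {P}

lemma mem_extE {σ : Equiv.Perm (Fin n)} :
    σ ∈ extE P ↔ ∀ j k, P.lt j k → σ.symm j < σ.symm k := by simp [extE]

lemma simplexOf_subset_order {σ : Equiv.Perm (Fin n)} (hσ : σ ∈ extE P) :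
    simplexOf n σ ⊆ orderPolytope n P := by
  rintro x ⟨hc, hm⟩
  refine ⟨hc, fun j k hjk => ?_⟩
  by_cases hne : j = k
  · subst hne; exact le_refl _
  · have hlt := Plt_of_le_of_ne hjk hne
    exact mono_le_of_symm_lt hm ((mem_extE.1 hσ) j k hlt)

lemma order_diff_subset :
    orderPolytope n P \ degen n ⊆ ⋃ σ ∈ extE P, simplexOf n σ := by
  rintro x ⟨hx, hd⟩
  have hinj : Function.Injective x := not_not.1 hd
  have hmem : x ∈ simplexOf n (Tuple.sort x) := ⟨hx.1, Tuple.monotone_sort x⟩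
  have hE : Tuple.sort x ∈ extE P := by
    refine mem_extE.2 fun j k hjk => ?_
    have hle : x j ≤ x k := hx.2 j k (Ple_of_lt hjk)
    have hne : x j ≠ x k := fun h => Plt_ne hjk (hinj h)
    by_contra hc
    exact hne (le_antisymm hle (mono_le_of_not_lt (Tuple.monotone_sort x) hc))
  exact Set.mem_biUnion hE hmem

lemma pairwise_aedisjoint_simplex (s : Finset (Equiv.Perm (Fin n))) :
    (↑s : Set (Equiv.Perm (Fin n))).Pairwise
      (Function.onFun (AEDisjoint volume) (fun σ => simplexOf n σ)) :=
  fun σ _ τ _ hne => measure_mono_null (inter_subset_degen hne) volume_degen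

lemma volume_orderPolytope :
    volume (orderPolytope n P) = (extE P).card * (n.factorial : ENNReal)⁻¹ := by
  have hU := measure_biUnion_finset₀ (μ := volume) (pairwise_aedisjoint_simplex (extE P))
    (fun τ _ => (measurableSet_simplexOf τ).nullMeasurableSet)
  have hval : volume (⋃ σ ∈ extE P, simplexOf n σ) = (extE P).card * (n.factorial : ENNReal)⁻¹ := by
    rw [hU, Finset.sum_congr rfl (fun τ _ => volume_simplexOf τ), Finset.sum_const, nsmul_eq_mul]
  have hsub : ⋃ σ ∈ extE P, simplexOf n σ ⊆ orderPolytope n P :=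
    Set.iUnion₂_subset fun σ hσ => simplexOf_subset_order hσ
  have hsup : orderPolytope n P ⊆ (⋃ σ ∈ extE P, simplexOf n σ) ∪ degen n := by
    intro x hx
    by_cases hd : x ∈ degen n
    · exact Or.inr hd
    · exact Or.inl (order_diff_subset ⟨hx, hd⟩)
  apply le_antisymm
  · calc volume (orderPolytope n P) ≤ volume ((⋃ σ ∈ extE P, simplexOf n σ) ∪ degen n) :=
        measure_mono hsup
      _ ≤ volume (⋃ σ ∈ extE P, simplexOf n σ) + volume (degen n) := measure_union_le _ _
      _ = (extE P).card * (n.factorial : ENNReal)⁻¹ := by rw [volume_degen, add_zero, hval]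
  · rw [← hval]; exact measure_mono hsub

lemma card_extE : (extE P).card = numLinExtOrder n P := by
  rw [numLinExtOrder, Nat.card_eq_fintype_card]
  rw [← Fintype.card_coe (extE P)]
  apply Fintype.card_congr
  refine ⟨fun σ => ⟨σ.1.symm, mem_extE.1 σ.2⟩, fun f => ⟨f.1.symm, mem_extE.2 (by simpa using f.2)⟩,
    ?_, ?_⟩
  · intro σ; exact Subtype.ext (Equiv.symm_symm _)
  · intro f; exact Subtype.ext (Equiv.symm_symm _)

end OrderVolume

section ChainVolume

variable {n : ℕ} {P : PartialOrder (Fin n)}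

lemma phiT_eq_LmapF {σ : Equiv.Perm (Fin n)} {x : Fin n → ℝ} (hx : x ∈ simplexOf n σ) :
    phiT P x = LmapF σ (predP P) x := by
  funext i
  rw [phiT, LmapF_apply]
  congr 1
  by_cases h : (predP P i).Nonempty
  · rw [dif_pos h]
    apply le_antisymm
    · rw [Finset.fold_max_le]
      exact ⟨(hx.1 (jmaxF σ _ h)).1, fun j hj => mono_le_of_symm_le hx.2 (symm_le_jmaxF hj)⟩
    · exact le_fold_max_of_mem (jmaxF_mem σ _ h)
  · rw [dif_neg h, Finset.not_nonempty_iff_eq_empty.1 h, Finset.fold_empty]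

lemma hlt_of_extE {σ : Equiv.Perm (Fin n)} (hσ : σ ∈ extE P) :
    ∀ i (h : (predP P i).Nonempty), σ.symm (jmaxF σ (predP P i) h) < σ.symm i :=
  fun i h => (mem_extE.1 hσ) _ _ (mem_predP.1 (jmaxF_mem σ _ h))

lemma image_inter_degen_null (σ : Equiv.Perm (Fin n)) :
    volume (LmapF σ (predP P) '' (simplexOf n σ ∩ degen n)) = 0 :=
  volume_LmapF_image_le σ _ (measure_mono_null Set.inter_subset_right volume_degen)

lemma volume_chainPolytope :
    volume (chainPolytope n P) = (extE P).card * (n.factorial : ENNReal)⁻¹ := by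
  set F : Equiv.Perm (Fin n) → Set (Fin n → ℝ) := fun σ => LmapF σ (predP P) '' simplexOf n σ
    with hF
  set N : Set (Fin n → ℝ) :=
    ⋃ σ : Equiv.Perm (Fin n), LmapF σ (predP P) '' (simplexOf n σ ∩ degen n) with hN
  have hmeas : ∀ σ ∈ extE P, MeasurableSet (F σ) := fun σ hσ =>
    measurableSet_LmapF_image σ _ (hlt_of_extE hσ) (measurableSet_simplexOf σ)
  have hvol : ∀ σ ∈ extE P, volume (F σ) = (n.factorial : ENNReal)⁻¹ := fun σ hσ => by
    rw [hF]
    rw [volume_LmapF_image σ _ (hlt_of_extE hσ), volume_simplexOf]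
  have hnull : volume N = 0 :=
    measure_iUnion_null fun σ => image_inter_degen_null σ
  have hCsub : chainPolytope n P ⊆ (⋃ σ ∈ extE P, F σ) ∪ N := by
    intro y hy
    have hxO : psiT P y ∈ orderPolytope n P := psiT_mem_order hy
    have hyx : phiT P (psiT P y) = y := phiT_psiT hy.1
    by_cases hd : psiT P y ∈ degen n
    · right
      have hcube : psiT P y ∈ simplexOf n (Tuple.sort (psiT P y)) :=
        ⟨hxO.1, Tuple.monotone_sort _⟩
      exact Set.mem_iUnion.2 ⟨Tuple.sort (psiT P y),
        ⟨psiT P y, ⟨hcube, hd⟩, by rw [← phiT_eq_LmapF hcube, hyx]⟩⟩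
    · left
      obtain ⟨σ, hσE, hσx⟩ := Set.mem_iUnion₂.1 (order_diff_subset ⟨hxO, hd⟩)
      exact Set.mem_biUnion hσE ⟨psiT P y, hσx, by rw [← phiT_eq_LmapF hσx, hyx]⟩
  have hsubC : (⋃ σ ∈ extE P, F σ) ⊆ chainPolytope n P := by
    refine Set.iUnion₂_subset fun σ hσ => ?_
    rintro y ⟨x, hx, rfl⟩
    rw [← phiT_eq_LmapF hx]
    exact phiT_mem_chain (simplexOf_subset_order hσ hx)
  have hdisj : (↑(extE P) : Set (Equiv.Perm (Fin n))).Pairwise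
      (Function.onFun (AEDisjoint volume) F) := by
    intro σ hσ τ hτ hne
    have hsub2 : F σ ∩ F τ ⊆ LmapF σ (predP P) '' (simplexOf n σ ∩ degen n) := by
      rintro y ⟨⟨x, hx, rfl⟩, ⟨x', hx', hE⟩⟩
      have h1 : phiT P x = phiT P x' := by
        rw [phiT_eq_LmapF hx, phiT_eq_LmapF hx', hE]
      have hxeq : x = x' := phiT_injOn x (simplexOf_subset_order (Finset.mem_coe.1 hσ) hx) x'
        (simplexOf_subset_order (Finset.mem_coe.1 hτ) hx') h1
      refine ⟨x, ⟨hx, inter_subset_degen hne ⟨hx, hxeq ▸ hx'⟩⟩, rfl⟩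
    exact measure_mono_null hsub2 (image_inter_degen_null σ)
  have hU := measure_biUnion_finset₀ (μ := volume) hdisj
    (fun σ hσ => (hmeas σ hσ).nullMeasurableSet)
  rw [Finset.sum_congr rfl hvol, Finset.sum_const, nsmul_eq_mul] at hU
  apply le_antisymm
  · calc volume (chainPolytope n P) ≤ volume ((⋃ σ ∈ extE P, F σ) ∪ N) := measure_mono hCsub
      _ ≤ volume (⋃ σ ∈ extE P, F σ) + volume N := measure_union_le _ _
      _ = (extE P).card * (n.factorial : ENNReal)⁻¹ := by rw [hnull, add_zero, hU]
  · rw [← hU]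
    exact measure_mono hsubC

end ChainVolume

theorem stmt_6 (n : ℕ) (P : PartialOrder (Fin n)) :
    volume (chainPolytope n P) = (numLinExtOrder n P : ENNReal) / (Nat.factorial n : ENNReal) ∧
    volume (chainPolytope n P) = volume (orderPolytope n P) := by
  have h1 : volume (chainPolytope n P) = (extE P).card * (n.factorial : ENNReal)⁻¹ :=
    volume_chainPolytope
  have h2 : volume (orderPolytope n P) = (extE P).card * (n.factorial : ENNReal)⁻¹ :=
    volume_orderPolytope
  constructor
  · rw [h1, card_extE, div_eq_mul_inv]
  · rw [h1, h2]
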